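/- arXiv:1505.01079 — 2 statements merged into one kernel-verified Lean document; each statement's English description precedes it below -/
import Mathlib

section
/- For a multiplicative subset L of R, the localization of the Hasse-Schmidt algebra satisfies HS^m_{R/S}[L^{-1}] ≅ HS^m_{R[L^{-1}]/S} as R[L^{-1}]-algebras. -/
noncomputable section
open MvPolynomial

/-- The universal symbols `d^n x` for the Hasse–Schmidt algebra. -/
def hsGen (R : Type*) [CommRing R] (m : ℕ) (n : ℕ) (x : R) :
    MvPolynomial ({i : ℕ // 1 ≤ i ∧ i ≤ m} × R) R :=
  if h : 1 ≤ n ∧ n ≤ m then X (⟨n, h⟩, x) else if n = 0 then C x else 0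

/-- The ideal of Hasse–Schmidt relations. -/
def hsRel (S R : Type*) [CommRing S] [CommRing R] [Algebra S R] (m : ℕ) :
    Ideal (MvPolynomial ({i : ℕ // 1 ≤ i ∧ i ≤ m} × R) R) :=
  Ideal.span {p | (∃ i : ℕ, ∃ x y : R,
      p = hsGen R m i (x + y) - hsGen R m i x - hsGen R m i y) ∨
    (∃ i : ℕ, 1 ≤ i ∧ ∃ s : S, p = hsGen R m i (algebraMap S R s)) ∨
    (∃ k : ℕ, k ≤ m ∧ ∃ x y : R, p = hsGen R m k (x * y) -
      ∑ q ∈ Finset.HasAntidiagonal.antidiagonal k, hsGen R m q.1 x * hsGen R m q.2 y)}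

/-- The Hasse–Schmidt algebra `HS^m_{R/S}`, which represents the functor
`Q ↦ {Hasse–Schmidt derivations of order m from R to Q}`, equivalently
`Hom_{S-alg}(HS^m_{R/S}, Q) ≅ Hom_{S-alg}(R, Q[t]/(t^{m+1}))` naturally in `Q`. -/
def HSAlg (S R : Type*) [CommRing S] [CommRing R] [Algebra S R] (m : ℕ) : Type _ :=
  MvPolynomial ({i : ℕ // 1 ≤ i ∧ i ≤ m} × R) R ⧸ hsRel S R m

section
variable (S R : Type*) [CommRing S] [CommRing R] [Algebra S R] (m : ℕ)

instance : CommRing (HSAlg S R m) := Ideal.Quotient.commRing _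
instance : Algebra S (HSAlg S R m) := Ideal.Quotient.algebra S
instance : Algebra R (HSAlg S R m) := Ideal.Quotient.algebra R

end

/- ====== auxiliary development ====== -/
section HSAux

variable (S R : Type*) [CommRing S] [CommRing R] [Algebra S R] (m : ℕ)

/-- The quotient map onto the Hasse–Schmidt algebra, as a ring hom. -/
def hsMk : MvPolynomial ({i : ℕ // 1 ≤ i ∧ i ≤ m} × R) R →+* HSAlg S R m :=
  Ideal.Quotient.mk (hsRel S R m)

lemma hsGen_zero (x : R) : hsGen R m 0 x = C x := by
  simp [hsGen]

lemma hsGen_of (n : ℕ) (h : 1 ≤ n ∧ n ≤ m) (x : R) :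
    hsGen R m n x = X (⟨n, h⟩, x) := dif_pos h

lemma hsGen_of_gt (n : ℕ) (h : m < n) (x : R) : hsGen R m n x = 0 := by
  have h1 : ¬ (1 ≤ n ∧ n ≤ m) := fun hc => absurd hc.2 (not_le.2 h)
  have h2 : n ≠ 0 := by omega
  simp [hsGen, h1, h2]

variable {R m}

lemma algebraMap_hsAlg (x : R) :
    algebraMap R (HSAlg S R m) x = hsMk S R m (C x) := rfl

lemma hsMk_gen_add (i : ℕ) (x y : R) :
    hsMk S R m (hsGen R m i (x + y)) =
      hsMk S R m (hsGen R m i x) + hsMk S R m (hsGen R m i y) := by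
  have hmem : hsGen R m i (x + y) - hsGen R m i x - hsGen R m i y ∈ hsRel S R m :=
    Ideal.subset_span (Or.inl ⟨i, x, y, rfl⟩)
  have h0 := (Ideal.Quotient.eq_zero_iff_mem).2 hmem
  rw [map_sub, map_sub, sub_sub, sub_eq_zero] at h0
  exact h0

lemma hsMk_gen_alg (i : ℕ) (hi : 1 ≤ i) (s : S) :
    hsMk S R m (hsGen R m i (algebraMap S R s)) = 0 :=
  (Ideal.Quotient.eq_zero_iff_mem).2
    (Ideal.subset_span (Or.inr (Or.inl ⟨i, hi, s, rfl⟩)))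

lemma hsMk_gen_mul (k : ℕ) (hk : k ≤ m) (x y : R) :
    hsMk S R m (hsGen R m k (x * y)) =
      ∑ q ∈ Finset.HasAntidiagonal.antidiagonal k,
        hsMk S R m (hsGen R m q.1 x) * hsMk S R m (hsGen R m q.2 y) := by
  have hmem : hsGen R m k (x * y) -
      ∑ q ∈ Finset.HasAntidiagonal.antidiagonal k, hsGen R m q.1 x * hsGen R m q.2 y ∈ hsRel S R m :=
    Ideal.subset_span (Or.inr (Or.inr ⟨k, hk, x, y, rfl⟩))
  have h0 := (Ideal.Quotient.eq_zero_iff_mem).2 hmem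
  rw [map_sub, sub_eq_zero, map_sum] at h0
  simp only [map_mul] at h0
  exact h0

lemma hsMk_gen_zero_elt (i : ℕ) (hi : 1 ≤ i) :
    hsMk S R m (hsGen R m i (0 : R)) = 0 := by
  have h := hsMk_gen_add S (m := m) i (0 : R) 0
  rw [add_zero] at h
  exact (left_eq_add.1 h)

lemma hsMk_gen_one : ∀ k : ℕ, 1 ≤ k → hsMk S R m (hsGen R m k (1 : R)) = 0 := by
  intro k
  induction k using Nat.strong_induction_on with
  | _ k ih =>
    intro hk
    by_cases hkm : k ≤ m
    · have hrel := hsMk_gen_mul S k hkm (1 : R) 1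
      rw [one_mul, Finset.Nat.sum_antidiagonal_eq_sum_range_succ_mk,
        Finset.sum_range_succ] at hrel
      have h0 : hsMk S R m (hsGen R m 0 (1 : R)) = 1 := by
        rw [hsGen_zero]; exact map_one ((hsMk S R m).comp C)
      have hsum : ∑ i ∈ Finset.range k,
          hsMk S R m (hsGen R m i (1 : R)) * hsMk S R m (hsGen R m (k - i) (1 : R)) =
            hsMk S R m (hsGen R m k (1 : R)) := by
        rw [Finset.sum_eq_single_of_mem 0 (Finset.mem_range.2 hk)]
        · rw [h0, Nat.sub_zero, one_mul]
        · intro i hi hine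
          rw [ih i (Finset.mem_range.1 hi) (Nat.one_le_iff_ne_zero.2 hine), zero_mul]
      rw [hsum, Nat.sub_self, h0, mul_one] at hrel
      have : hsMk S R m (hsGen R m k (1 : R)) + hsMk S R m (hsGen R m k (1 : R)) =
          hsMk S R m (hsGen R m k (1 : R)) + 0 := by rw [add_zero]; exact hrel.symm
      exact add_left_cancel this
    · rw [hsGen_of_gt R m k (lt_of_not_ge hkm), map_zero]

end HSAux

section HSTrunc

variable (m : ℕ) (A : Type*) [CommRing A]

/-- The truncated polynomial ring `A[X]/(X^{m+1})`. -/
def hsTrunc : Type _ :=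
  Polynomial A ⧸ Ideal.span {(Polynomial.X : Polynomial A) ^ (m + 1)}

instance : CommRing (hsTrunc m A) := Ideal.Quotient.commRing _

/-- The quotient map onto the truncated polynomial ring. -/
def hsTmk : Polynomial A →+* hsTrunc m A :=
  Ideal.Quotient.mk (Ideal.span {(Polynomial.X : Polynomial A) ^ (m + 1)})

lemma hsTmk_surjective : Function.Surjective (hsTmk m A) :=
  Ideal.Quotient.mk_surjective

/-- The `i`-th coefficient of a truncated polynomial (well behaved for `i ≤ m`). -/
def tcoeff (i : ℕ) (t : hsTrunc m A) : A :=
  (Function.surjInv (hsTmk_surjective m A) t).coeff i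

variable {m A}

lemma tcoeff_mk {i : ℕ} (hi : i ≤ m) (p : Polynomial A) :
    tcoeff m A i (hsTmk m A p) = p.coeff i := by
  have h : hsTmk m A (Function.surjInv (hsTmk_surjective m A) (hsTmk m A p)) = hsTmk m A p :=
    Function.surjInv_eq (hsTmk_surjective m A) _
  have hmem := (Ideal.Quotient.eq).1 h
  have hdvd : (Polynomial.X : Polynomial A) ^ (m + 1) ∣
      Function.surjInv (hsTmk_surjective m A) (hsTmk m A p) - p :=
    Ideal.mem_span_singleton.1 hmem
  have hc := (Polynomial.X_pow_dvd_iff).1 hdvd i (Nat.lt_succ_of_le hi)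
  rw [Polynomial.coeff_sub, sub_eq_zero] at hc
  exact hc

lemma tcoeff_add {i : ℕ} (hi : i ≤ m) (a b : hsTrunc m A) :
    tcoeff m A i (a + b) = tcoeff m A i a + tcoeff m A i b := by
  obtain ⟨p, rfl⟩ := hsTmk_surjective m A a
  obtain ⟨q, rfl⟩ := hsTmk_surjective m A b
  rw [← map_add, tcoeff_mk hi, tcoeff_mk hi, tcoeff_mk hi, Polynomial.coeff_add]

lemma tcoeff_mul {k : ℕ} (hk : k ≤ m) (a b : hsTrunc m A) :
    tcoeff m A k (a * b) =
      ∑ q ∈ Finset.HasAntidiagonal.antidiagonal k, tcoeff m A q.1 a * tcoeff m A q.2 b := by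
  obtain ⟨p, rfl⟩ := hsTmk_surjective m A a
  obtain ⟨q, rfl⟩ := hsTmk_surjective m A b
  rw [← map_mul, tcoeff_mk hk, Polynomial.coeff_mul]
  refine Finset.sum_congr rfl fun ij hij => ?_
  have h := Finset.HasAntidiagonal.mem_antidiagonal.1 hij
  rw [tcoeff_mk (le_trans (le_trans (Nat.le_add_right _ _) h.le) hk),
    tcoeff_mk (le_trans (le_trans (Nat.le_add_left _ _) h.le) hk)]

variable (m A)

/-- Constant coefficient of a truncated polynomial, as a ring hom. -/
def hsC0 : hsTrunc m A →+* A :=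
  Ideal.Quotient.lift _ Polynomial.constantCoeff (by
    intro p hp
    obtain ⟨q, rfl⟩ := Ideal.mem_span_singleton.1 hp
    rw [map_mul, map_pow]
    simp [Polynomial.constantCoeff_apply, Polynomial.coeff_X_zero])

variable {m A}

lemma tcoeff_zero (t : hsTrunc m A) : tcoeff m A 0 t = hsC0 m A t := by
  obtain ⟨p, rfl⟩ := hsTmk_surjective m A t
  rw [tcoeff_mk (Nat.zero_le m)]
  rfl

lemma hsTmk_X_pow_nilpotent : IsNilpotent (hsTmk m A Polynomial.X) := by
  refine ⟨m + 1, ?_⟩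
  rw [← map_pow]
  exact Ideal.Quotient.eq_zero_iff_mem.2 (Ideal.subset_span rfl)

end HSTrunc

section HSD

variable (S : Type*) {R : Type*} [CommRing S] [CommRing R] [Algebra S R] {m : ℕ}
variable {A : Type*} [CommRing A]

/-- The polynomial `∑ ρ(d_i x) X^i` for a ring hom `ρ` out of the Hasse–Schmidt algebra. -/
def hsDpoly (ρ : HSAlg S R m →+* A) (x : R) : Polynomial A :=
  ∑ i ∈ Finset.range (m + 1),
    Polynomial.C (ρ (hsMk S R m (hsGen R m i x))) * Polynomial.X ^ i

lemma hsDpoly_coeff (ρ : HSAlg S R m →+* A) (x : R) (j : ℕ) :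
    (hsDpoly S ρ x).coeff j =
      if j ≤ m then ρ (hsMk S R m (hsGen R m j x)) else 0 := by
  rw [hsDpoly, Polynomial.finset_sum_coeff]
  simp only [Polynomial.coeff_C_mul, Polynomial.coeff_X_pow, mul_ite, mul_one, mul_zero]
  rw [Finset.sum_ite_eq (Finset.range (m + 1)) j
    (fun i => ρ (hsMk S R m (hsGen R m i x)))]
  simp only [Finset.mem_range, Nat.lt_succ_iff]

lemma hsDpoly_add (ρ : HSAlg S R m →+* A) (x y : R) :
    hsDpoly S ρ (x + y) = hsDpoly S ρ x + hsDpoly S ρ y := by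
  rw [hsDpoly, hsDpoly, hsDpoly, ← Finset.sum_add_distrib]
  refine Finset.sum_congr rfl fun i _ => ?_
  rw [hsMk_gen_add, map_add, map_add, add_mul]

lemma hsDpoly_one (ρ : HSAlg S R m →+* A) : hsDpoly S ρ (1 : R) = 1 := by
  rw [hsDpoly]
  rw [Finset.sum_eq_single_of_mem 0 (Finset.mem_range.2 (Nat.succ_pos m))]
  · rw [hsGen_zero]
    have : hsMk S R m (C (1 : R)) = 1 := map_one ((hsMk S R m).comp C)
    rw [this, map_one, map_one, pow_zero, mul_one]
  · intro i hi hine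
    rw [hsMk_gen_one S i (Nat.one_le_iff_ne_zero.2 hine), map_zero, map_zero, zero_mul]

/-- The universal truncated Hasse–Schmidt derivation associated to a ring hom `ρ`
out of the Hasse–Schmidt algebra. -/
def hsD (ρ : HSAlg S R m →+* A) : R →+* hsTrunc m A :=
  RingHom.mk'
    { toFun := fun x => hsTmk m A (hsDpoly S ρ x)
      map_one' := by show hsTmk m A (hsDpoly S ρ 1) = 1; rw [hsDpoly_one, map_one]
      map_mul' := by
        intro x y
        rw [← map_mul]
        refine (Ideal.Quotient.eq).2 (Ideal.mem_span_singleton.2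
          ((Polynomial.X_pow_dvd_iff).2 fun d hd => ?_))
        have hdm : d ≤ m := Nat.lt_succ_iff.1 hd
        rw [Polynomial.coeff_sub, Polynomial.coeff_mul, hsDpoly_coeff, if_pos hdm,
          hsMk_gen_mul S d hdm, map_sum, sub_eq_zero]
        refine Finset.sum_congr rfl fun ij hij => ?_
        have h := Finset.HasAntidiagonal.mem_antidiagonal.1 hij
        rw [map_mul, hsDpoly_coeff, hsDpoly_coeff,
          if_pos (le_trans (le_trans (Nat.le_add_right _ _) h.le) hdm),
          if_pos (le_trans (le_trans (Nat.le_add_left _ _) h.le) hdm)] }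
    (by intro x y; simp only [MonoidHom.coe_mk, OneHom.coe_mk]
        rw [hsDpoly_add, map_add])

lemma hsD_apply (ρ : HSAlg S R m →+* A) (x : R) :
    hsD S ρ x = hsTmk m A (hsDpoly S ρ x) := rfl

lemma tcoeff_hsD (ρ : HSAlg S R m →+* A) (x : R) {i : ℕ} (hi : i ≤ m) :
    tcoeff m A i (hsD S ρ x) = ρ (hsMk S R m (hsGen R m i x)) := by
  rw [hsD_apply, tcoeff_mk hi, hsDpoly_coeff, if_pos hi]

lemma hsC0_hsD (ρ : HSAlg S R m →+* A) (x : R) :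
    hsC0 m A (hsD S ρ x) = ρ (hsMk S R m (C x)) := by
  rw [← tcoeff_zero, tcoeff_hsD S ρ x (Nat.zero_le m), hsGen_zero]

/-- `hsD ρ` takes values `unit + nilpotent` at elements whose image under `ρ∘mk∘C`
is a unit, hence is a unit there. -/
lemma hsD_isUnit (ρ : HSAlg S R m →+* A) (l : R)
    (hl : IsUnit (ρ (hsMk S R m (C l)))) : IsUnit (hsD S ρ l) := by
  have hdecomp : hsDpoly S ρ l =
      (∑ i ∈ Finset.range m,
        Polynomial.C (ρ (hsMk S R m (hsGen R m (i + 1) l))) * Polynomial.X ^ i) *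
        Polynomial.X + Polynomial.C (ρ (hsMk S R m (C l))) := by
    rw [hsDpoly, Finset.sum_range_succ']
    congr 1
    · rw [Finset.sum_mul]
      refine Finset.sum_congr rfl fun i _ => ?_
      rw [pow_succ, mul_assoc]
    · rw [hsGen_zero, pow_zero, mul_one]
  rw [hsD_apply, hdecomp, map_add, map_mul]
  refine IsNilpotent.isUnit_add_right_of_commute ?_ ?_ (Commute.all _ _)
  · exact Commute.isNilpotent_mul_left (Commute.all _ _) hsTmk_X_pow_nilpotent
  · exact hl.map ((hsTmk m A).comp Polynomial.C)

end HSD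

section
variable (S R : Type*) [CommRing S] [CommRing R] [Algebra S R] (m : ℕ) (L : Submonoid R)

/-- `R[L⁻¹]` as an `S`-algebra. -/
instance (priority := 10) : Algebra S (Localization L) :=
  ((algebraMap R (Localization L)).comp (algebraMap S R)).toAlgebra

/-- The image of `L` in the Hasse–Schmidt algebra `HS^m_{R/S}`. -/
def hsImageSubmonoid : Submonoid (HSAlg S R m) :=
  Submonoid.map (algebraMap R (HSAlg S R m)) L

/-- The canonical map `R[L⁻¹] → HS^m_{R/S}[L⁻¹]` induced by `R → HS^m_{R/S}`. -/
def hsLocCanon : Localization L →+* Localization (hsImageSubmonoid S R m L) :=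
  IsLocalization.map (T := hsImageSubmonoid S R m L)
    (Localization (hsImageSubmonoid S R m L)) (algebraMap R (HSAlg S R m))
    (fun r hr => Submonoid.mem_comap.2 (Submonoid.mem_map_of_mem _ hr))

/- ===== the forward map `HS(R)[L⁻¹] → HS(R[L⁻¹])` ===== -/

/-- The map on polynomial generators inducing `HS^m_{R/S} → HS^m_{R[L⁻¹]/S}`. -/
def hsFPoly : MvPolynomial ({i : ℕ // 1 ≤ i ∧ i ≤ m} × R) R →+*
    HSAlg S (Localization L) m :=
  MvPolynomial.eval₂Hom
    ((algebraMap (Localization L) (HSAlg S (Localization L) m)).comp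
      (algebraMap R (Localization L)))
    (fun v => hsMk S (Localization L) m (X (v.1, algebraMap R (Localization L) v.2)))

lemma hsFPoly_C (r : R) :
    hsFPoly S R m L (C r) =
      hsMk S (Localization L) m (C (algebraMap R (Localization L) r)) := by
  rw [hsFPoly, MvPolynomial.eval₂Hom_C]; rfl

lemma hsFPoly_X (v : {i : ℕ // 1 ≤ i ∧ i ≤ m} × R) :
    hsFPoly S R m L (X v) =
      hsMk S (Localization L) m (X (v.1, algebraMap R (Localization L) v.2)) :=
  MvPolynomial.eval₂Hom_X' _ _ _

lemma hsFPoly_gen (i : ℕ) (x : R) :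
    hsFPoly S R m L (hsGen R m i x) =
      hsMk S (Localization L) m (hsGen (Localization L) m i
        (algebraMap R (Localization L) x)) := by
  by_cases h : 1 ≤ i ∧ i ≤ m
  · rw [hsGen_of R m i h, hsGen_of (Localization L) m i h, hsFPoly_X]
  · by_cases h0 : i = 0
    · subst h0
      rw [hsGen_zero, hsGen_zero, hsFPoly_C]
    · rw [hsGen, dif_neg h, if_neg h0, hsGen, dif_neg h, if_neg h0, map_zero, map_zero]

lemma hsFPoly_rel : ∀ a ∈ hsRel S R m, hsFPoly S R m L a = 0 := by
  intro a ha
  have hle : hsRel S R m ≤ RingHom.ker (hsFPoly S R m L) := by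
    rw [hsRel, Ideal.span_le]
    rintro p (⟨i, x, y, rfl⟩ | ⟨i, hi, s, rfl⟩ | ⟨k, hk, x, y, rfl⟩) <;>
      simp only [SetLike.mem_coe, RingHom.mem_ker]
    · rw [map_sub, map_sub, hsFPoly_gen, hsFPoly_gen, hsFPoly_gen, map_add,
        hsMk_gen_add, sub_sub, sub_self]
    · rw [hsFPoly_gen]
      have hs : algebraMap R (Localization L) (algebraMap S R s)
          = algebraMap S (Localization L) s := rfl
      rw [hs, hsMk_gen_alg S i hi]
    · rw [map_sub, hsFPoly_gen, map_mul, hsMk_gen_mul S k hk, map_sum, sub_eq_zero]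
      refine Finset.sum_congr rfl fun q _ => ?_
      rw [map_mul, hsFPoly_gen, hsFPoly_gen]
  exact RingHom.mem_ker.mp (hle ha)

/-- The induced ring hom `HS^m_{R/S} → HS^m_{R[L⁻¹]/S}`. -/
def hsFHom : HSAlg S R m →+* HSAlg S (Localization L) m :=
  Ideal.Quotient.lift (hsRel S R m) (hsFPoly S R m L) (hsFPoly_rel S R m L)

lemma hsFHom_mk (p : MvPolynomial ({i : ℕ // 1 ≤ i ∧ i ≤ m} × R) R) :
    hsFHom S R m L (hsMk S R m p) = hsFPoly S R m L p :=
  Ideal.Quotient.lift_mk _ _ _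

lemma hsFHom_isUnit : ∀ y : hsImageSubmonoid S R m L, IsUnit (hsFHom S R m L y) := by
  rintro ⟨y, l, hl, rfl⟩
  show IsUnit (hsFHom S R m L (algebraMap R (HSAlg S R m) l))
  rw [algebraMap_hsAlg S, hsFHom_mk, hsFPoly_C, ← algebraMap_hsAlg S]
  exact (IsLocalization.map_units (Localization L) ⟨l, hl⟩).map
    (algebraMap (Localization L) (HSAlg S (Localization L) m))

/-- The induced ring hom `HS^m_{R/S}[L⁻¹] → HS^m_{R[L⁻¹]/S}`. -/
def hsF' : Localization (hsImageSubmonoid S R m L) →+* HSAlg S (Localization L) m :=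
  IsLocalization.lift (hsFHom_isUnit S R m L)

lemma hsF'_alg (a : HSAlg S R m) :
    hsF' S R m L (algebraMap (HSAlg S R m)
      (Localization (hsImageSubmonoid S R m L)) a) = hsFHom S R m L a :=
  IsLocalization.lift_eq _ _

/- ===== the universal derivation over `R[L⁻¹]` ===== -/

/-- The universal truncated derivation of `R` with values in `HS^m_{R/S}[L⁻¹]`. -/
def hsDD : R →+* hsTrunc m (Localization (hsImageSubmonoid S R m L)) :=
  hsD S (algebraMap (HSAlg S R m) (Localization (hsImageSubmonoid S R m L)))

lemma hsDD_isUnit : ∀ l : L, IsUnit (hsDD S R m L l) := by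
  rintro ⟨l, hl⟩
  refine hsD_isUnit S _ l ?_
  rw [← algebraMap_hsAlg]
  exact IsLocalization.map_units (M := hsImageSubmonoid S R m L)
    (Localization (hsImageSubmonoid S R m L)) ⟨algebraMap R (HSAlg S R m) l, l, hl, rfl⟩

/-- Extension of the universal truncated derivation to `R[L⁻¹]`. -/
def hsDL : Localization L →+* hsTrunc m (Localization (hsImageSubmonoid S R m L)) :=
  IsLocalization.lift (hsDD_isUnit S R m L)

lemma hsDL_alg (x : R) :
    hsDL S R m L (algebraMap R (Localization L) x) = hsDD S R m L x :=
  IsLocalization.lift_eq _ _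

lemma hsC0_hsDL :
    (hsC0 m (Localization (hsImageSubmonoid S R m L))).comp (hsDL S R m L) =
      hsLocCanon S R m L := by
  apply IsLocalization.ringHom_ext L
  ext x
  simp only [RingHom.comp_apply]
  rw [hsDL_alg, hsDD, hsC0_hsD, ← algebraMap_hsAlg, hsLocCanon, IsLocalization.map_eq]

lemma tcoeff_hsDL_alg {i : ℕ} (hi : i ≤ m) (x : R) :
    tcoeff m (Localization (hsImageSubmonoid S R m L)) i
        (hsDL S R m L (algebraMap R (Localization L) x)) =
      algebraMap (HSAlg S R m) (Localization (hsImageSubmonoid S R m L))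
        (hsMk S R m (hsGen R m i x)) := by
  rw [hsDL_alg, hsDD, tcoeff_hsD S _ x hi]

/- ===== the backward map ===== -/

/-- The map on polynomial generators inducing `HS^m_{R[L⁻¹]/S} → HS^m_{R/S}[L⁻¹]`. -/
def hsGPoly : MvPolynomial ({i : ℕ // 1 ≤ i ∧ i ≤ m} × Localization L)
      (Localization L) →+* Localization (hsImageSubmonoid S R m L) :=
  MvPolynomial.eval₂Hom (hsLocCanon S R m L)
    (fun v => tcoeff m (Localization (hsImageSubmonoid S R m L)) v.1.1 (hsDL S R m L v.2))

lemma hsGPoly_C (z : Localization L) :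
    hsGPoly S R m L (C z) = hsLocCanon S R m L z := by
  rw [hsGPoly, MvPolynomial.eval₂Hom_C]

lemma hsGPoly_X (v : {i : ℕ // 1 ≤ i ∧ i ≤ m} × Localization L) :
    hsGPoly S R m L (X v) =
      tcoeff m (Localization (hsImageSubmonoid S R m L)) v.1.1 (hsDL S R m L v.2) :=
  MvPolynomial.eval₂Hom_X' _ _ _

lemma hsGPoly_gen {i : ℕ} (hi : i ≤ m) (z : Localization L) :
    hsGPoly S R m L (hsGen (Localization L) m i z) =
      tcoeff m (Localization (hsImageSubmonoid S R m L)) i (hsDL S R m L z) := by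
  by_cases h1 : 1 ≤ i
  · rw [hsGen_of (Localization L) m i ⟨h1, hi⟩, hsGPoly_X]
  · have h0 : i = 0 := by omega
    subst h0
    rw [hsGen_zero, hsGPoly_C, tcoeff_zero]
    exact (DFunLike.congr_fun (hsC0_hsDL S R m L) z).symm

lemma hsGPoly_rel : ∀ a ∈ hsRel S (Localization L) m, hsGPoly S R m L a = 0 := by
  intro a ha
  have hle : hsRel S (Localization L) m ≤ RingHom.ker (hsGPoly S R m L) := by
    rw [hsRel, Ideal.span_le]
    rintro p (⟨i, x, y, rfl⟩ | ⟨i, hi, s, rfl⟩ | ⟨k, hk, x, y, rfl⟩) <;>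
      simp only [SetLike.mem_coe, RingHom.mem_ker]
    · by_cases him : i ≤ m
      · rw [map_sub, map_sub, hsGPoly_gen S R m L him, hsGPoly_gen S R m L him,
          hsGPoly_gen S R m L him, map_add, tcoeff_add him, sub_sub, sub_self]
      · have hgt := lt_of_not_ge him
        rw [hsGen_of_gt _ m i hgt, hsGen_of_gt _ m i hgt, hsGen_of_gt _ m i hgt]
        simp
    · by_cases him : i ≤ m
      · rw [hsGPoly_gen S R m L him]
        have hs : algebraMap S (Localization L) s =
            algebraMap R (Localization L) (algebraMap S R s) := rfl
        rw [hs, tcoeff_hsDL_alg S R m L him, hsMk_gen_alg S i hi, map_zero]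
      · rw [hsGen_of_gt _ m i (lt_of_not_ge him), map_zero]
    · rw [map_sub, hsGPoly_gen S R m L hk, map_mul, tcoeff_mul hk, map_sum, sub_eq_zero]
      refine Finset.sum_congr rfl fun q hq => ?_
      have h := Finset.HasAntidiagonal.mem_antidiagonal.1 hq
      rw [map_mul, hsGPoly_gen S R m L (le_trans (le_trans (Nat.le_add_right _ _) h.le) hk),
        hsGPoly_gen S R m L (le_trans (le_trans (Nat.le_add_left _ _) h.le) hk)]
  exact RingHom.mem_ker.mp (hle ha)

/-- The induced ring hom `HS^m_{R[L⁻¹]/S} → HS^m_{R/S}[L⁻¹]`. -/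
def hsGHom : HSAlg S (Localization L) m →+* Localization (hsImageSubmonoid S R m L) :=
  Ideal.Quotient.lift (hsRel S (Localization L) m) (hsGPoly S R m L) (hsGPoly_rel S R m L)

lemma hsGHom_mk (p : MvPolynomial ({i : ℕ // 1 ≤ i ∧ i ≤ m} × Localization L)
    (Localization L)) :
    hsGHom S R m L (hsMk S (Localization L) m p) = hsGPoly S R m L p :=
  Ideal.Quotient.lift_mk _ _ _

/- ===== transporting truncated polynomials along `hsF'` ===== -/

/-- The map on truncated polynomial rings induced by `hsF'`. -/
def hsPsi : hsTrunc m (Localization (hsImageSubmonoid S R m L)) →+*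
    hsTrunc m (HSAlg S (Localization L) m) :=
  Ideal.Quotient.lift _
    ((hsTmk m (HSAlg S (Localization L) m)).comp (Polynomial.mapRingHom (hsF' S R m L)))
    (by
      intro p hp
      obtain ⟨q, rfl⟩ := Ideal.mem_span_singleton.1 hp
      rw [RingHom.comp_apply, Polynomial.coe_mapRingHom, Polynomial.map_mul,
        Polynomial.map_pow, Polynomial.map_X, map_mul]
      have hz : hsTmk m (HSAlg S (Localization L) m) (Polynomial.X ^ (m + 1)) = 0 :=
        Ideal.Quotient.eq_zero_iff_mem.2 (Ideal.subset_span rfl)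
      rw [hz, zero_mul])

lemma hsPsi_mk (p : Polynomial (Localization (hsImageSubmonoid S R m L))) :
    hsPsi S R m L (hsTmk m (Localization (hsImageSubmonoid S R m L)) p) =
      hsTmk m (HSAlg S (Localization L) m) (p.map (hsF' S R m L)) :=
  Ideal.Quotient.lift_mk _ _ _

lemma hsF'_tcoeff {i : ℕ} (hi : i ≤ m)
    (t : hsTrunc m (Localization (hsImageSubmonoid S R m L))) :
    hsF' S R m L (tcoeff m (Localization (hsImageSubmonoid S R m L)) i t) =
      tcoeff m (HSAlg S (Localization L) m) i (hsPsi S R m L t) := by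
  obtain ⟨p, rfl⟩ := hsTmk_surjective m _ t
  rw [tcoeff_mk hi, hsPsi_mk, tcoeff_mk hi, Polynomial.coeff_map]

lemma hsPsi_hsDL : (hsPsi S R m L).comp (hsDL S R m L) =
    hsD S (RingHom.id (HSAlg S (Localization L) m)) := by
  apply IsLocalization.ringHom_ext L
  ext x
  simp only [RingHom.comp_apply]
  rw [hsDL_alg, hsDD, hsD_apply, hsPsi_mk, hsD_apply]
  congr 1
  rw [hsDpoly, hsDpoly, Polynomial.map_sum]
  refine Finset.sum_congr rfl fun i _ => ?_
  rw [Polynomial.map_mul, Polynomial.map_C, Polynomial.map_pow, Polynomial.map_X,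
    hsF'_alg, hsFHom_mk, hsFPoly_gen]
  rfl

lemma hsF'_tcoeff_hsDL {i : ℕ} (hi : i ≤ m) (z : Localization L) :
    hsF' S R m L (tcoeff m (Localization (hsImageSubmonoid S R m L)) i
        (hsDL S R m L z)) =
      hsMk S (Localization L) m (hsGen (Localization L) m i z) := by
  have h := DFunLike.congr_fun (hsPsi_hsDL S R m L) z
  simp only [RingHom.comp_apply] at h
  rw [hsF'_tcoeff S R m L hi, h, tcoeff_hsD S _ z hi, RingHom.id_apply]

/- ===== the two composites ===== -/

lemma hsG_hsF' : (hsGHom S R m L).comp (hsF' S R m L) = RingHom.id _ := by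
  apply IsLocalization.ringHom_ext (hsImageSubmonoid S R m L)
  apply Ideal.Quotient.ringHom_ext
  apply MvPolynomial.ringHom_ext
  · intro r
    show hsGHom S R m L (hsF' S R m L (algebraMap (HSAlg S R m)
        (Localization (hsImageSubmonoid S R m L)) (hsMk S R m (C r)))) =
      algebraMap (HSAlg S R m) (Localization (hsImageSubmonoid S R m L)) (hsMk S R m (C r))
    rw [hsF'_alg, hsFHom_mk, hsFPoly_C, hsGHom_mk, hsGPoly_C, hsLocCanon,
      IsLocalization.map_eq, algebraMap_hsAlg S]
  · intro v
    show hsGHom S R m L (hsF' S R m L (algebraMap (HSAlg S R m)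
        (Localization (hsImageSubmonoid S R m L)) (hsMk S R m (X v)))) =
      algebraMap (HSAlg S R m) (Localization (hsImageSubmonoid S R m L)) (hsMk S R m (X v))
    rw [hsF'_alg, hsFHom_mk, hsFPoly_X, hsGHom_mk, hsGPoly_X,
      tcoeff_hsDL_alg S R m L v.1.2.2, hsGen_of R m v.1.1 v.1.2]

lemma hsF'_locCanon : (hsF' S R m L).comp (hsLocCanon S R m L) =
    algebraMap (Localization L) (HSAlg S (Localization L) m) := by
  apply IsLocalization.ringHom_ext L
  ext x
  simp only [RingHom.comp_apply]
  rw [hsLocCanon, IsLocalization.map_eq, hsF'_alg, algebraMap_hsAlg S, hsFHom_mk, hsFPoly_C]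
  rfl

lemma hsF'_hsG : (hsF' S R m L).comp (hsGHom S R m L) = RingHom.id _ := by
  apply Ideal.Quotient.ringHom_ext
  apply MvPolynomial.ringHom_ext
  · intro z
    show hsF' S R m L (hsGHom S R m L (hsMk S (Localization L) m (C z))) =
      hsMk S (Localization L) m (C z)
    have h := DFunLike.congr_fun (hsF'_locCanon S R m L) z
    simp only [RingHom.comp_apply] at h
    rw [hsGHom_mk, hsGPoly_C, h, algebraMap_hsAlg S]
  · intro v
    show hsF' S R m L (hsGHom S R m L (hsMk S (Localization L) m (X v))) =
      hsMk S (Localization L) m (X v)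
    rw [hsGHom_mk, hsGPoly_X, hsF'_tcoeff_hsDL S R m L v.1.2.2,
      hsGen_of (Localization L) m v.1.1 v.1.2]


/-- For a multiplicative subset `L` of `R`, the localization of the
Hasse–Schmidt algebra satisfies `HS^m_{R/S}[L⁻¹] ≅ HS^m_{R[L⁻¹]/S}` as `R[L⁻¹]`-algebras:
there is an `S`-algebra isomorphism commuting with the canonical maps from `R[L⁻¹]`. -/
theorem hsAlg_localization :
    ∃ e : Localization (hsImageSubmonoid S R m L) ≃ₐ[S] HSAlg S (Localization L) m,
      ∀ z : Localization L,
        e (hsLocCanon S R m L z) = algebraMap (Localization L) (HSAlg S (Localization L) m) z := by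
  refine ⟨AlgEquiv.ofRingEquiv (f := RingEquiv.ofRingHom (hsF' S R m L) (hsGHom S R m L)
      (hsF'_hsG S R m L) (hsG_hsF' S R m L)) ?_, ?_⟩
  · intro s
    show hsF' S R m L (algebraMap (HSAlg S R m) (Localization (hsImageSubmonoid S R m L))
        (hsMk S R m (C (algebraMap S R s)))) = algebraMap S (HSAlg S (Localization L) m) s
    rw [hsF'_alg, hsFHom_mk, hsFPoly_C]
    rfl
  · intro z
    show hsF' S R m L (hsLocCanon S R m L z) = _
    have h := DFunLike.congr_fun (hsF'_locCanon S R m L) z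
    simpa only [RingHom.comp_apply] using h
end
end
end

section
/- Jet spaces commute with base change: given morphisms of schemes f: X → Y and Y' → Y, setting X' := X ×_Y Y', there is an isomorphism of Y'-schemes J_m(X'/Y') ≅ J_m(X/Y) ×_Y Y' for all 0 ≤ m ≤ ∞. In the affine formulation: for ring maps S → R and S → S', with R' := R ⊗_S S', one has HS^m_{R'/S'} ≅ HS^m_{R/S} ⊗_S S'. -/
noncomputable section
open MvPolynomial TensorProduct

set_option linter.unnecessarySeqFocus false

namespace HSBC
section basic
variable (S R : Type*) [CommRing S] [CommRing R] [Algebra S R] (m : ℕ)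

/-- The class of `hsGen` in the Hasse–Schmidt algebra. -/
def δ (n : ℕ) (x : R) : HSAlg S R m :=
  Ideal.Quotient.mk (hsRel S R m) (hsGen R m n x)

variable {S R m}

lemma mk_C (x : R) : Ideal.Quotient.mk (hsRel S R m) (C x) = δ S R m 0 x := by
  simp [δ, hsGen]

lemma mk_X {n : ℕ} (h : 1 ≤ n ∧ n ≤ m) (x : R) :
    Ideal.Quotient.mk (hsRel S R m) (X (⟨n, h⟩, x)) = δ S R m n x := by
  simp [δ, hsGen, h]

lemma algebraMap_R_eq (x : R) : algebraMap R (HSAlg S R m) x = δ S R m 0 x := by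
  rw [← mk_C]; rfl

lemma algebraMap_S_eq (s : S) :
    algebraMap S (HSAlg S R m) s = δ S R m 0 (algebraMap S R s) := by
  rw [← mk_C]; rfl

lemma δ_add (n : ℕ) (x y : R) :
    δ S R m n (x + y) = δ S R m n x + δ S R m n y := by
  have h : Ideal.Quotient.mk (hsRel S R m)
      (hsGen R m n (x + y) - hsGen R m n x - hsGen R m n y) = 0 :=
    Ideal.Quotient.eq_zero_iff_mem.mpr (Ideal.subset_span (Or.inl ⟨n, x, y, rfl⟩))
  rw [map_sub, map_sub, sub_sub, sub_eq_zero] at h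
  exact h

lemma δ_algebraMap {n : ℕ} (hn : 1 ≤ n) (s : S) :
    δ S R m n (algebraMap S R s) = 0 :=
  Ideal.Quotient.eq_zero_iff_mem.mpr
    (Ideal.subset_span (Or.inr (Or.inl ⟨n, hn, s, rfl⟩)))

lemma δ_mul {k : ℕ} (hk : k ≤ m) (x y : R) :
    δ S R m k (x * y) =
      ∑ q ∈ Finset.HasAntidiagonal.antidiagonal k, δ S R m q.1 x * δ S R m q.2 y := by
  have h : Ideal.Quotient.mk (hsRel S R m)
      (hsGen R m k (x * y) -
        ∑ q ∈ Finset.HasAntidiagonal.antidiagonal k, hsGen R m q.1 x * hsGen R m q.2 y) = 0 :=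
    Ideal.Quotient.eq_zero_iff_mem.mpr
      (Ideal.subset_span (Or.inr (Or.inr ⟨k, hk, x, y, rfl⟩)))
  rw [map_sub, sub_eq_zero, map_sum] at h
  simp only [map_mul] at h
  exact h

lemma δ_gt {n : ℕ} (h : m < n) (x : R) : δ S R m n x = 0 := by
  unfold δ hsGen
  rw [dif_neg (by omega), if_neg (by omega), map_zero]
  rfl

lemma δ_zero_right (n : ℕ) : δ S R m n (0 : R) = 0 := by
  have h := δ_add (S := S) (R := R) (m := m) n 0 0
  rw [add_zero] at h
  exact (left_eq_add.mp h)

lemma δ_one {n : ℕ} (hn : 1 ≤ n) : δ S R m n (1 : R) = 0 := by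
  have : (1 : R) = algebraMap S R 1 := by simp
  rw [this, δ_algebraMap hn]

lemma δ_alg_mul (k : ℕ) (s : S) (x : R) :
    δ S R m k (algebraMap S R s * x) = algebraMap S (HSAlg S R m) s * δ S R m k x := by
  by_cases hk : k ≤ m
  · rw [δ_mul hk]
    rw [Finset.sum_eq_single_of_mem (0, k) (by simp)]
    · rw [algebraMap_S_eq]
    · rintro ⟨p, q⟩ hb hne
      have hp : 1 ≤ p := by
        rcases Nat.eq_zero_or_pos p with h0 | h1
        · exfalso; apply hne
          rw [Finset.HasAntidiagonal.mem_antidiagonal] at hb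
          subst h0; simpa using congrArg (Prod.mk 0) hb
        · exact h1
      rw [δ_algebraMap hp, zero_mul]
  · rw [δ_gt (by omega), δ_gt (by omega), mul_zero]

/-- `δ k` as an `S`-linear map. -/
def dLin (k : ℕ) : R →ₗ[S] HSAlg S R m where
  toFun := δ S R m k
  map_add' := δ_add k
  map_smul' := by
    intro s x
    simp only [RingHom.id_apply, Algebra.smul_def]
    exact δ_alg_mul k s x

@[simp] lemma dLin_apply (k : ℕ) (x : R) : dLin (S := S) (m := m) k x = δ S R m k x := rfl

lemma tmul_mul_tmul_hs {A B C : Type*} [CommRing A] [CommRing B] [CommRing C]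
    [Algebra A B] [Algebra A C] {k : ℕ} (a b : C) (x y : HSAlg A B k) :
    a ⊗ₜ[A] x * b ⊗ₜ[A] y = (a * b) ⊗ₜ[A] (x * y) :=
  @Algebra.TensorProduct.tmul_mul_tmul A C (HSAlg A B k) _ _ _ _ _ _ Algebra.toModule _ _ _ _ _ _

end basic
end HSBC

namespace HSBC
section bc
variable (S R S' : Type*) [CommRing S] [CommRing R] [CommRing S']
  [Algebra S R] [Algebra S S'] (m : ℕ)

instance : Algebra S (HSAlg S' (S' ⊗[S] R) m) := Ideal.Quotient.algebra S

/-- `R → HSAlg S R m` as an `S`-algebra hom. -/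
def ι : R →ₐ[S] HSAlg S R m :=
  { algebraMap R (HSAlg S R m) with
    commutes' := fun s => by
      simp only [RingHom.toMonoidHom_eq_coe, OneHom.toFun_eq_coe, MonoidHom.toOneHom_coe,
        MonoidHom.coe_coe]
      rw [algebraMap_R_eq, algebraMap_S_eq] }

/-- The inclusion `S' ⊗ R → S' ⊗ HSAlg S R m`. -/
def incl : S' ⊗[S] R →ₐ[S'] S' ⊗[S] HSAlg S R m :=
  Algebra.TensorProduct.map (AlgHom.id S' S') (ι S R m)

@[simp] lemma incl_tmul (s' : S') (r : R) :
    incl S R S' m (s' ⊗ₜ[S] r) = s' ⊗ₜ[S] (δ S R m 0 r) := by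
  simp [incl, ι, algebraMap_R_eq]

/-- Base change of `δ k`. -/
def Dlin (k : ℕ) : S' ⊗[S] R →ₗ[S'] S' ⊗[S] HSAlg S R m :=
  LinearMap.baseChange S' (dLin (S := S) (R := R) (m := m) k)

@[simp] lemma Dlin_tmul (k : ℕ) (s' : S') (r : R) :
    Dlin S R S' m k (s' ⊗ₜ[S] r) = s' ⊗ₜ[S] δ S R m k r := rfl

/-- The value of `fwd` on generators. -/
def Δ (n : ℕ) (z : S' ⊗[S] R) : S' ⊗[S] HSAlg S R m :=
  if 1 ≤ n ∧ n ≤ m then Dlin S R S' m n z else if n = 0 then incl S R S' m z else 0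

lemma Δ_tmul (n : ℕ) (s' : S') (r : R) :
    Δ S R S' m n (s' ⊗ₜ[S] r) = s' ⊗ₜ[S] δ S R m n r := by
  unfold Δ
  split_ifs with h h0
  · rfl
  · subst h0; simp
  · rw [δ_gt (by omega), tmul_zero]

lemma Δ_add (n : ℕ) (z w : S' ⊗[S] R) :
    Δ S R S' m n (z + w) = Δ S R S' m n z + Δ S R S' m n w := by
  unfold Δ; split_ifs <;> simp

lemma Δ_zero_right (n : ℕ) : Δ S R S' m n (0 : S' ⊗[S] R) = 0 := by
  unfold Δ; split_ifs <;> simp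

lemma Δ_algebraMap {n : ℕ} (hn : 1 ≤ n) (s' : S') :
    Δ S R S' m n (algebraMap S' (S' ⊗[S] R) s') = 0 := by
  rw [Algebra.TensorProduct.algebraMap_apply, Δ_tmul, δ_one hn, tmul_zero]

lemma Δ_mul {k : ℕ} (hk : k ≤ m) (z w : S' ⊗[S] R) :
    Δ S R S' m k (z * w) =
      ∑ q ∈ Finset.HasAntidiagonal.antidiagonal k, Δ S R S' m q.1 z * Δ S R S' m q.2 w := by
  induction z using TensorProduct.induction_on with
  | zero => simp [Δ_zero_right]
  | add z₁ z₂ h₁ h₂ =>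
    rw [add_mul, Δ_add, h₁, h₂, ← Finset.sum_add_distrib]
    exact Finset.sum_congr rfl fun q _ => by rw [Δ_add, add_mul]
  | tmul s' x =>
    induction w using TensorProduct.induction_on with
    | zero => simp [Δ_zero_right]
    | add w₁ w₂ h₁ h₂ =>
      rw [mul_add, Δ_add, h₁, h₂, ← Finset.sum_add_distrib]
      exact Finset.sum_congr rfl fun q _ => by rw [Δ_add, mul_add]
    | tmul t' y =>
      rw [Algebra.TensorProduct.tmul_mul_tmul, Δ_tmul, δ_mul hk, tmul_sum]
      exact Finset.sum_congr rfl fun q _ => by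
        rw [Δ_tmul, Δ_tmul, tmul_mul_tmul_hs]

/-- The forward map on polynomials. -/
def fwdP : MvPolynomial ({i : ℕ // 1 ≤ i ∧ i ≤ m} × (S' ⊗[S] R)) (S' ⊗[S] R) →+*
    S' ⊗[S] HSAlg S R m :=
  eval₂Hom (incl S R S' m).toRingHom (fun v => Dlin S R S' m v.1.1 v.2)

lemma fwdP_hsGen (n : ℕ) (z : S' ⊗[S] R) :
    fwdP S R S' m (hsGen (S' ⊗[S] R) m n z) = Δ S R S' m n z := by
  unfold hsGen Δ
  split_ifs with h h0 <;>
    simp only [fwdP, coe_eval₂Hom, eval₂_X, eval₂_C, map_zero, RingHom.coe_coe] <;> rfl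

lemma fwd_ker : hsRel S' (S' ⊗[S] R) m ≤ RingHom.ker (fwdP S R S' m) := by
  rw [hsRel, Ideal.span_le]
  rintro p (⟨n, x, y, rfl⟩ | ⟨n, hn, s, rfl⟩ | ⟨k, hk, x, y, rfl⟩) <;>
    simp only [SetLike.mem_coe, RingHom.mem_ker, map_sub, map_sum, map_mul, fwdP_hsGen]
  · rw [Δ_add, sub_sub, sub_eq_zero]
  · rw [Δ_algebraMap S R S' m hn]
  · rw [Δ_mul S R S' m hk, sub_eq_zero]

/-- The forward map `HSAlg S' (S'⊗R) m → S' ⊗ HSAlg S R m`. -/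
def fwd : HSAlg S' (S' ⊗[S] R) m →+* S' ⊗[S] HSAlg S R m :=
  Ideal.Quotient.lift _ (fwdP S R S' m) (fun _ ha => fwd_ker S R S' m ha)

@[simp] lemma fwd_mk (p) : fwd S R S' m (Ideal.Quotient.mk (hsRel S' (S' ⊗[S] R) m) p)
    = fwdP S R S' m p := rfl

lemma fwd_δ (n : ℕ) (z : S' ⊗[S] R) :
    fwd S R S' m (δ S' (S' ⊗[S] R) m n z) = Δ S R S' m n z := fwdP_hsGen S R S' m n z

end bc
end HSBC

namespace HSBC
section bc2
variable (S R S' : Type*) [CommRing S] [CommRing R] [CommRing S']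
  [Algebra S R] [Algebra S S'] (m : ℕ)

/-- The base map `R → HSAlg S' (S'⊗R) m`. -/
def ρ : R →+* HSAlg S' (S' ⊗[S] R) m :=
  (algebraMap (S' ⊗[S] R) (HSAlg S' (S' ⊗[S] R) m)).comp
    (Algebra.TensorProduct.includeRight (R := S) (A := S') (B := R)).toRingHom

lemma ρ_apply (r : R) : ρ S R S' m r = δ S' (S' ⊗[S] R) m 0 ((1 : S') ⊗ₜ[S] r) := by
  simp [ρ, algebraMap_R_eq]

/-- The backward map on polynomials. -/
def bwdP : MvPolynomial ({i : ℕ // 1 ≤ i ∧ i ≤ m} × R) R →+* HSAlg S' (S' ⊗[S] R) m :=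
  eval₂Hom (ρ S R S' m) (fun v => δ S' (S' ⊗[S] R) m v.1.1 ((1 : S') ⊗ₜ[S] v.2))

lemma bwdP_hsGen (n : ℕ) (r : R) :
    bwdP S R S' m (hsGen R m n r) = δ S' (S' ⊗[S] R) m n ((1 : S') ⊗ₜ[S] r) := by
  unfold hsGen
  split_ifs with h h0
  · simp [bwdP]
  · subst h0
    simp only [bwdP, coe_eval₂Hom, eval₂_C, ρ_apply]
  · rw [map_zero, δ_gt (by omega)]

lemma one_tmul_algebraMap (s : S) :
    (1 : S') ⊗ₜ[S] (algebraMap S R s) = algebraMap S' (S' ⊗[S] R) (algebraMap S S' s) := by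
  rw [Algebra.TensorProduct.algebraMap_apply, Algebra.algebraMap_eq_smul_one (A := S'),
    Algebra.algebraMap_eq_smul_one (A := R), tmul_smul, smul_tmul', algebraMap_smul]

lemma bwd_ker : hsRel S R m ≤ RingHom.ker (bwdP S R S' m) := by
  rw [hsRel, Ideal.span_le]
  rintro p (⟨n, x, y, rfl⟩ | ⟨n, hn, s, rfl⟩ | ⟨k, hk, x, y, rfl⟩) <;>
    simp only [SetLike.mem_coe, RingHom.mem_ker, map_sub, map_sum, map_mul, bwdP_hsGen]
  · rw [tmul_add, δ_add, sub_sub, sub_eq_zero]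
  · rw [one_tmul_algebraMap, δ_algebraMap hn]
  · have : (1 : S') ⊗ₜ[S] (x * y) = ((1 : S') ⊗ₜ[S] x) * ((1 : S') ⊗ₜ[S] y) := by
      rw [Algebra.TensorProduct.tmul_mul_tmul, one_mul]
    rw [this, δ_mul hk, sub_eq_zero]

/-- The map `HSAlg S R m → HSAlg S' (S'⊗R) m`. -/
def jHom : HSAlg S R m →+* HSAlg S' (S' ⊗[S] R) m :=
  Ideal.Quotient.lift _ (bwdP S R S' m) (fun _ ha => bwd_ker S R S' m ha)

@[simp] lemma jHom_mk (p) : jHom S R S' m (Ideal.Quotient.mk (hsRel S R m) p)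
    = bwdP S R S' m p := rfl

lemma jHom_δ (n : ℕ) (r : R) :
    jHom S R S' m (δ S R m n r) = δ S' (S' ⊗[S] R) m n ((1 : S') ⊗ₜ[S] r) :=
  bwdP_hsGen S R S' m n r

/-- `jHom` as an `S`-algebra hom. -/
def jAlg : HSAlg S R m →ₐ[S] HSAlg S' (S' ⊗[S] R) m :=
  { jHom S R S' m with
    commutes' := fun s => by
      simp only [RingHom.toMonoidHom_eq_coe, OneHom.toFun_eq_coe, MonoidHom.toOneHom_coe,
        MonoidHom.coe_coe]
      rw [algebraMap_S_eq, jHom_δ, one_tmul_algebraMap]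
      have : algebraMap S (HSAlg S' (S' ⊗[S] R) m) s
          = algebraMap (S' ⊗[S] R) (HSAlg S' (S' ⊗[S] R) m) (algebraMap S (S' ⊗[S] R) s) := rfl
      rw [this, algebraMap_R_eq, IsScalarTower.algebraMap_apply S S' (S' ⊗[S] R)] }

/-- `algebraMap S' (HSAlg S' (S'⊗R) m)` as an `S`-algebra hom. -/
def fS' : S' →ₐ[S] HSAlg S' (S' ⊗[S] R) m :=
  { algebraMap S' (HSAlg S' (S' ⊗[S] R) m) with
    commutes' := fun s => by
      simp only [RingHom.toMonoidHom_eq_coe, OneHom.toFun_eq_coe, MonoidHom.toOneHom_coe,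
        MonoidHom.coe_coe]
      have h1 : algebraMap S (HSAlg S' (S' ⊗[S] R) m) s
          = algebraMap (S' ⊗[S] R) (HSAlg S' (S' ⊗[S] R) m) (algebraMap S (S' ⊗[S] R) s) := rfl
      have h2 : algebraMap S' (HSAlg S' (S' ⊗[S] R) m) (algebraMap S S' s)
          = algebraMap (S' ⊗[S] R) (HSAlg S' (S' ⊗[S] R) m)
              (algebraMap S' (S' ⊗[S] R) (algebraMap S S' s)) := rfl
      rw [h1, h2, IsScalarTower.algebraMap_apply S S' (S' ⊗[S] R)] }

/-- The backward map. -/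
def bwd : S' ⊗[S] HSAlg S R m →ₐ[S] HSAlg S' (S' ⊗[S] R) m :=
  Algebra.TensorProduct.lift (fS' S R S' m) (jAlg S R S' m) (fun _ _ => Commute.all _ _)

lemma bwd_tmul (s' : S') (h : HSAlg S R m) :
    bwd S R S' m (s' ⊗ₜ[S] h)
      = algebraMap S' (HSAlg S' (S' ⊗[S] R) m) s' * jHom S R S' m h :=
  Algebra.TensorProduct.lift_tmul _ _ _ _ _

end bc2
end HSBC

namespace HSBC
section bc3
variable (S R S' : Type*) [CommRing S] [CommRing R] [CommRing S']
  [Algebra S R] [Algebra S S'] (m : ℕ)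

lemma tmul_eq_algebraMap_mul (s' : S') (r : R) :
    (s' ⊗ₜ[S] r : S' ⊗[S] R) = algebraMap S' (S' ⊗[S] R) s' * ((1 : S') ⊗ₜ[S] r) := by
  rw [Algebra.TensorProduct.algebraMap_apply, Algebra.TensorProduct.tmul_mul_tmul,
    mul_one, one_mul]
  simp

lemma bwd_Δ (n : ℕ) (z : S' ⊗[S] R) :
    bwd S R S' m (Δ S R S' m n z) = δ S' (S' ⊗[S] R) m n z := by
  induction z using TensorProduct.induction_on with
  | zero => rw [Δ_zero_right, map_zero, δ_zero_right]
  | add z₁ z₂ h₁ h₂ => rw [Δ_add, map_add, h₁, h₂, ← δ_add]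
  | tmul s' r =>
    rw [Δ_tmul, bwd_tmul, jHom_δ]
    conv_rhs => rw [tmul_eq_algebraMap_mul S R S' s' r]
    rw [δ_alg_mul]

lemma fwdP_C (z : S' ⊗[S] R) : fwdP S R S' m (C z) = incl S R S' m z := by
  simp [fwdP]

lemma fwdP_X (v) : fwdP S R S' m (X v) = Dlin S R S' m v.1.1 v.2 := by
  simp [fwdP]

lemma Δ_zero_eq (z : S' ⊗[S] R) : Δ S R S' m 0 z = incl S R S' m z := by
  unfold Δ
  rw [if_neg (by omega), if_pos rfl]

lemma Δ_mem_eq {n : ℕ} (hn : 1 ≤ n ∧ n ≤ m) (z : S' ⊗[S] R) :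
    Δ S R S' m n z = Dlin S R S' m n z := by
  unfold Δ
  rw [if_pos hn]

lemma bwd_fwd (a : HSAlg S' (S' ⊗[S] R) m) : bwd S R S' m (fwd S R S' m a) = a := by
  obtain ⟨p, rfl⟩ := Ideal.Quotient.mk_surjective a
  induction p using MvPolynomial.induction_on with
  | C z =>
    rw [fwd_mk, fwdP_C, ← Δ_zero_eq, bwd_Δ, mk_C]
  | add p q hp hq =>
    simp only [map_add, hp, hq]
    exact (congrArg (bwd S R S' m) (map_add (fwd S R S' m) (Ideal.Quotient.mk _ p)
      (Ideal.Quotient.mk _ q))).trans ((map_add (bwd S R S' m) _ _).trans (congrArg₂ (· + ·) hp hq))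
  | mul_X p v hp =>
    obtain ⟨⟨n, hn⟩, z⟩ := v
    simp only [map_mul]
    erw [map_mul (fwd S R S' m), map_mul (bwd S R S' m)]
    rw [hp, fwd_mk, fwdP_X, ← Δ_mem_eq S R S' m hn, bwd_Δ, mk_X hn]
    rfl

lemma bwdP_C (r : R) : bwdP S R S' m (C r) = δ S' (S' ⊗[S] R) m 0 ((1 : S') ⊗ₜ[S] r) := by
  simp [bwdP, ρ_apply]

lemma bwdP_X (v) : bwdP S R S' m (X v) = δ S' (S' ⊗[S] R) m v.1.1 ((1 : S') ⊗ₜ[S] v.2) := by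
  simp [bwdP]

lemma fwd_jHom (h : HSAlg S R m) :
    fwd S R S' m (jHom S R S' m h) = (1 : S') ⊗ₜ[S] h := by
  obtain ⟨p, rfl⟩ := Ideal.Quotient.mk_surjective h
  induction p using MvPolynomial.induction_on with
  | C r =>
    rw [jHom_mk, bwdP_C, fwd_δ, Δ_tmul, mk_C]
  | add p q hp hq =>
    simp only [map_add, hp, hq, tmul_add]
    exact (congrArg (fwd S R S' m) (map_add (jHom S R S' m) (Ideal.Quotient.mk _ p)
      (Ideal.Quotient.mk _ q))).trans ((map_add (fwd S R S' m) _ _).trans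
        ((congrArg₂ (· + ·) hp hq).trans (tmul_add _ _ _).symm))
  | mul_X p v hp =>
    obtain ⟨⟨n, hn⟩, r⟩ := v
    simp only [map_mul]
    erw [map_mul (jHom S R S' m), map_mul (fwd S R S' m)]
    rw [hp, jHom_mk, bwdP_X, fwd_δ, Δ_tmul, mk_X hn]
    exact (tmul_mul_tmul_hs (1 : S') 1 _ _).trans (congrArg₂ (· ⊗ₜ[S] ·) (one_mul (1 : S')) rfl)

lemma fwd_algebraMap (s' : S') :
    fwd S R S' m (algebraMap S' (HSAlg S' (S' ⊗[S] R) m) s')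
      = algebraMap S' (S' ⊗[S] HSAlg S R m) s' := by
  rw [algebraMap_S_eq (S := S') (R := S' ⊗[S] R), fwd_δ, Δ_zero_eq,
    Algebra.TensorProduct.algebraMap_apply, incl_tmul, ← algebraMap_R_eq, map_one,
    ← Algebra.TensorProduct.algebraMap_apply]

lemma fwd_bwd (x : S' ⊗[S] HSAlg S R m) : fwd S R S' m (bwd S R S' m x) = x := by
  induction x using TensorProduct.induction_on with
  | zero => simp
  | add x y hx hy => rw [map_add, map_add, hx, hy]
  | tmul s' h =>
    rw [bwd_tmul, map_mul, fwd_algebraMap, fwd_jHom, Algebra.TensorProduct.algebraMap_apply]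
    rw [tmul_mul_tmul_hs, mul_one, one_mul]
    simp

/-- The base change ring equivalence. -/
def equiv : HSAlg S' (S' ⊗[S] R) m ≃+* S' ⊗[S] HSAlg S R m where
  toFun := fwd S R S' m
  invFun := bwd S R S' m
  left_inv := bwd_fwd S R S' m
  right_inv := fwd_bwd S R S' m
  map_add' := map_add _
  map_mul' := map_mul _

/-- The base change algebra equivalence. -/
def algEquiv : HSAlg S' (S' ⊗[S] R) m ≃ₐ[S'] S' ⊗[S] HSAlg S R m :=
  AlgEquiv.ofRingEquiv (f := equiv S R S' m) (fun s' => fwd_algebraMap S R S' m s')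

end bc3
end HSBC

/-- Jet spaces commute with base change: for `f : X → Y` and
`Y' → Y`, with `X' := X ×_Y Y'`, one has `J_m(X'/Y') ≅ J_m(X/Y) ×_Y Y'` over `Y'`.
In the affine formulation: for ring maps `S → R` and `S → S'`, with `R' := S' ⊗_S R`,
one has `HS^m_{R'/S'} ≅ S' ⊗_S HS^m_{R/S}` as `S'`-algebras. -/
theorem hsAlg_base_change (S R S' : Type*) [CommRing S] [CommRing R] [CommRing S']
    [Algebra S R] [Algebra S S'] (m : ℕ) :
    Nonempty (HSAlg S' (S' ⊗[S] R) m ≃ₐ[S'] (S' ⊗[S] HSAlg S R m)) := by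
  exact ⟨HSBC.algEquiv S R S' m⟩
end
end
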